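/- arXiv:2311.01303 — 3 statements merged into one kernel-verified Lean document; each statement's English description precedes it below -/
import Mathlib

section
/- Let (X, Y) be a random vector in ℝ^p × ℝ with joint Lebesgue density (u,v) ↦ f(u)·g(v|u), where f is the marginal density of X and g(·|u) the conditional density of Y given X = u. Assume there exist β, η ∈ (0,1] and c > 0 such that: |f(u) − f(u')| ≤ c·‖u−u'‖^β for all u, u'; |g(v|u) − g(v|u')| ≤ c·‖u−u'‖^β for all v, u, u'; |g(v|u) − g(v'|u)| ≤ c·|v−v'|^η for all u, v, v'; and f, g are uniformly bounded. Then there exists a constant C > 0 such that for all x ∈ ℝ^p, y ∈ ℝ and all b ∈ (0,1), | P(‖X − x‖ ≤ b, |Y − y| ≤ b) − 2·vol(B_p(0,1))·b^{1+p}·f(x)·g(y|x) | ≤ C·b^{1+p}·(b^η + b^β), where B_p(0,1) is the closed Euclidean unit ball of ℝ^p. In particular P(‖X−x‖ ≤ b, |Y−y| ≤ b) = b^{1+p}·(2·vol(B_p(0,1))·f(x)g(y|x) + φ_b^{x,y}) with sup_{x,y}|φ_b^{x,y}| = O(b^η + b^β). -/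
open MeasureTheory Metric

private lemma cont_aux {α : Type*} [TopologicalSpace α] (φ : α → ℝ)
    (h : ∀ q₀ : α, ∃ ψ : α → ℝ, Filter.Tendsto ψ (nhds q₀) (nhds 0) ∧
      ∀ q, |φ q - φ q₀| ≤ ψ q) : Continuous φ := by
  rw [continuous_iff_continuousAt]
  intro q₀
  obtain ⟨ψ, hψ, hb⟩ := h q₀
  have : Filter.Tendsto (fun q => dist (φ q) (φ q₀)) (nhds q₀) (nhds 0) :=
    squeeze_zero (fun q => dist_nonneg) (fun q => by rw [Real.dist_eq]; exact hb q) hψ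
  exact tendsto_iff_dist_tendsto_zero.2 this

private lemma tendsto_pow_dist {α : Type*} [PseudoMetricSpace α] (q₀ : α) {γ : ℝ} (hγ : 0 < γ)
    (c : ℝ) : Filter.Tendsto (fun q => c * dist q q₀ ^ γ) (nhds q₀) (nhds 0) := by
  have h1 : Filter.Tendsto (fun q => dist q q₀) (nhds q₀) (nhds 0) := by
    simpa using (continuous_id.dist (continuous_const : Continuous fun _ : α => q₀)).tendsto q₀
  have h2 : Filter.Tendsto (fun t : ℝ => t ^ γ) (nhds 0) (nhds 0) := by
    have := (Real.continuousAt_rpow_const 0 γ (Or.inr hγ.le)).tendsto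
    rwa [Real.zero_rpow hγ.ne'] at this
  have := (h2.comp h1).const_mul c
  simpa using this

/-- Bivariate small-ball expansion for a Hölder joint density `f(u)·g(v|u)` on
`ℝ^p × ℝ`: there is a constant `C > 0` such that for all `x, y` and `b ∈ (0,1)`,
`|P(‖X−x‖ ≤ b, |Y−y| ≤ b) − 2·vol(B_p(0,1))·b^{1+p}·f(x)·g(y|x)|
  ≤ C·b^{1+p}·(b^η + b^β)`. -/
theorem smallball_joint_density_expansion (p : ℕ)
    {Ω : Type*} [MeasurableSpace Ω] (P : Measure Ω) [IsProbabilityMeasure P]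
    (X : Ω → EuclideanSpace ℝ (Fin p)) (Y : Ω → ℝ)
    (hX : Measurable X) (hY : Measurable Y)
    (f : EuclideanSpace ℝ (Fin p) → ℝ) (g : ℝ → EuclideanSpace ℝ (Fin p) → ℝ)
    (hf0 : ∀ u, 0 ≤ f u) (hg0 : ∀ v u, 0 ≤ g v u)
    (hlaw : Measure.map (fun ω => (X ω, Y ω)) P
      = volume.withDensity fun q => ENNReal.ofReal (f q.1 * g q.2 q.1))
    (β η c : ℝ) (hβ : β ∈ Set.Ioc (0 : ℝ) 1) (hη : η ∈ Set.Ioc (0 : ℝ) 1) (hc : 0 < c)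
    (hHf : ∀ u u', |f u - f u'| ≤ c * ‖u - u'‖ ^ β)
    (hHgx : ∀ v u u', |g v u - g v u'| ≤ c * ‖u - u'‖ ^ β)
    (hHgt : ∀ u v v', |g v u - g v' u| ≤ c * |v - v'| ^ η)
    (M : ℝ) (hfM : ∀ u, f u ≤ M) (hgM : ∀ v u, g v u ≤ M) :
    ∃ C > 0, ∀ (x : EuclideanSpace ℝ (Fin p)) (y b : ℝ), b ∈ Set.Ioo (0 : ℝ) 1 →
      |(P {ω | ‖X ω - x‖ ≤ b ∧ |Y ω - y| ≤ b}).toReal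
          - 2 * (volume (closedBall (0 : EuclideanSpace ℝ (Fin p)) 1)).toReal
              * b ^ (1 + p) * f x * g y x|
        ≤ C * b ^ (1 + p) * (b ^ η + b ^ β) := by
  have hβ0 : 0 < β := hβ.1
  have hη0 : 0 < η := hη.1
  have hM0 : 0 ≤ M := le_trans (hf0 0) (hfM 0)
  -- continuity of the density
  have hfcont : Continuous f := by
    refine cont_aux f fun u₀ => ⟨fun u => c * dist u u₀ ^ β, tendsto_pow_dist u₀ hβ0 c, ?_⟩
    intro u
    show |f u - f u₀| ≤ c * dist u u₀ ^ β
    rw [dist_eq_norm]; exact hHf u u₀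
  have hgcont : Continuous (fun q : EuclideanSpace ℝ (Fin p) × ℝ => g q.2 q.1) := by
    refine cont_aux _ fun q₀ => ⟨fun q => c * dist q.1 q₀.1 ^ β + c * dist q.2 q₀.2 ^ η, ?_, ?_⟩
    · have h1 := (tendsto_pow_dist q₀.1 hβ0 c).comp
        ((continuous_fst.tendsto q₀) : Filter.Tendsto Prod.fst (nhds q₀) (nhds q₀.1))
      have h2 := (tendsto_pow_dist q₀.2 hη0 c).comp
        ((continuous_snd.tendsto q₀) : Filter.Tendsto Prod.snd (nhds q₀) (nhds q₀.2))
      simpa using h1.add h2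
    · intro q
      show |g q.2 q.1 - g q₀.2 q₀.1| ≤ c * dist q.1 q₀.1 ^ β + c * dist q.2 q₀.2 ^ η
      calc |g q.2 q.1 - g q₀.2 q₀.1|
          ≤ |g q.2 q.1 - g q.2 q₀.1| + |g q.2 q₀.1 - g q₀.2 q₀.1| := abs_sub_le _ _ _
        _ ≤ c * dist q.1 q₀.1 ^ β + c * dist q.2 q₀.2 ^ η := by
            rw [dist_eq_norm, Real.dist_eq]
            exact add_le_add (hHgx q.2 q.1 q₀.1) (hHgt q₀.1 q.2 q₀.2)
  have hhcont : Continuous (fun q : EuclideanSpace ℝ (Fin p) × ℝ => f q.1 * g q.2 q.1) :=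
    (hfcont.comp continuous_fst).mul hgcont
  set vol₁ := (volume (closedBall (0 : EuclideanSpace ℝ (Fin p)) 1)).toReal with hvol₁
  have hvolpos : 0 < vol₁ :=
    ENNReal.toReal_pos (measure_closedBall_pos volume (0 : EuclideanSpace ℝ (Fin p)) one_pos).ne'
      measure_closedBall_lt_top.ne
  refine ⟨2 * vol₁ * (2 * (M + 1) * c), by positivity, ?_⟩
  intro x y b hb
  obtain ⟨hb0, hb1⟩ := hb
  set S : Set (EuclideanSpace ℝ (Fin p) × ℝ) := closedBall x b ×ˢ closedBall y b with hS
  have hSm : MeasurableSet S := measurableSet_closedBall.prod measurableSet_closedBall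
  have hpre : {ω | ‖X ω - x‖ ≤ b ∧ |Y ω - y| ≤ b} = (fun ω => (X ω, Y ω)) ⁻¹' S := by
    ext ω
    simp [hS, Set.mem_prod, mem_closedBall, dist_eq_norm, Real.dist_eq]
  have hmapm : Measurable fun ω => (X ω, Y ω) := hX.prodMk hY
  have h1 : P {ω | ‖X ω - x‖ ≤ b ∧ |Y ω - y| ≤ b}
      = ∫⁻ q in S, ENNReal.ofReal (f q.1 * g q.2 q.1) ∂volume := by
    rw [hpre, ← Measure.map_apply hmapm hSm, hlaw, withDensity_apply _ hSm]
  -- volume of S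
  have hfinrank : Module.finrank ℝ (EuclideanSpace ℝ (Fin p)) = p := finrank_euclideanSpace_fin
  have hvolS : (volume S).toReal = 2 * vol₁ * b ^ (1 + p) := by
    have : volume S = volume (closedBall x b) * volume (closedBall y b) := by
      rw [hS, ← Measure.prod_prod]
      rfl
    rw [this, Measure.addHaar_closedBall' volume x hb0.le, Real.volume_closedBall, hfinrank]
    rw [ENNReal.toReal_mul, ENNReal.toReal_mul, ENNReal.toReal_ofReal (by positivity),
      ENNReal.toReal_ofReal (by positivity), ← hvol₁, pow_add]
    ring
  have hvolSlt : volume S < ⊤ := by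
    rw [hS]
    exact (((isCompact_closedBall x b).prod (isCompact_closedBall y b)).measure_lt_top)
  -- integrability and conversion to a Bochner integral
  have h2 : (∫⁻ q in S, ENNReal.ofReal (f q.1 * g q.2 q.1) ∂volume).toReal
      = ∫ q in S, f q.1 * g q.2 q.1 ∂volume :=
    (integral_eq_lintegral_of_nonneg_ae (μ := volume.restrict S)
      (f := fun q : EuclideanSpace ℝ (Fin p) × ℝ => f q.1 * g q.2 q.1)
      (Filter.Eventually.of_forall fun q => mul_nonneg (hf0 q.1) (hg0 q.2 q.1))
      hhcont.aestronglyMeasurable.restrict).symm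
  -- constant integral
  have h3 : ∫ _ in S, (f x * g y x) ∂volume = (volume S).toReal * (f x * g y x) := by
    rw [setIntegral_const, smul_eq_mul]; rfl
  -- pointwise bound
  have hbη : (0:ℝ) ≤ b ^ η := Real.rpow_nonneg hb0.le η
  have hbβ : (0:ℝ) ≤ b ^ β := Real.rpow_nonneg hb0.le β
  have hpt : ∀ q ∈ S, ‖f q.1 * g q.2 q.1 - f x * g y x‖ ≤ 2 * (M + 1) * c * (b ^ η + b ^ β) := by
    rintro ⟨u, v⟩ hq
    obtain ⟨hu, hv⟩ := hq
    rw [mem_closedBall, dist_eq_norm] at hu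
    rw [mem_closedBall, Real.dist_eq] at hv
    have hu' : ‖u - x‖ ^ β ≤ b ^ β := Real.rpow_le_rpow (norm_nonneg _) hu hβ0.le
    have hv' : |v - y| ^ η ≤ b ^ η := Real.rpow_le_rpow (abs_nonneg _) hv hη0.le
    have e1 : |f u - f x| ≤ c * b ^ β :=
      (hHf u x).trans (by nlinarith)
    have e2 : |g v u - g v x| ≤ c * b ^ β :=
      (hHgx v u x).trans (by nlinarith)
    have e3 : |g v x - g y x| ≤ c * b ^ η :=
      (hHgt x v y).trans (by nlinarith)
    have key : |f u * g v u - f x * g y x| ≤ (c * b ^ β) * M + M * (c * b ^ β + c * b ^ η) := by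
      have hrw : f u * g v u - f x * g y x
          = (f u - f x) * g v u + f x * ((g v u - g v x) + (g v x - g y x)) := by ring
      rw [hrw]
      calc |(f u - f x) * g v u + f x * ((g v u - g v x) + (g v x - g y x))|
          ≤ |(f u - f x) * g v u| + |f x * ((g v u - g v x) + (g v x - g y x))| := abs_add_le _ _
        _ ≤ (c * b ^ β) * M + M * (c * b ^ β + c * b ^ η) := by
            rw [abs_mul, abs_mul]
            refine add_le_add (mul_le_mul e1 ?_ (abs_nonneg _) (by positivity))
              (mul_le_mul ?_ ((abs_add_le _ _).trans (add_le_add e2 e3)) (abs_nonneg _) hM0)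
            · rw [abs_of_nonneg (hg0 v u)]; exact hgM v u
            · rw [abs_of_nonneg (hf0 x)]; exact hfM x
    rw [Real.norm_eq_abs]
    refine key.trans ?_
    nlinarith [mul_nonneg hc.le hbβ, mul_nonneg hc.le hbη,
      mul_nonneg hM0 (mul_nonneg hc.le hbη), mul_nonneg hM0 (mul_nonneg hc.le hbβ)]
  -- main bound
  have hmain : ‖(∫ q in S, f q.1 * g q.2 q.1 ∂volume) - (volume S).toReal * (f x * g y x)‖
      ≤ 2 * (M + 1) * c * (b ^ η + b ^ β) * (volume S).toReal := by
    rw [← h3, ← integral_sub]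
    · exact norm_setIntegral_le_of_norm_le_const hvolSlt hpt
    · exact hhcont.continuousOn.integrableOn_compact
        ((isCompact_closedBall x b).prod (isCompact_closedBall y b))
    · exact integrableOn_const hvolSlt.ne
  rw [h1, h2]
  have goal_eq : 2 * vol₁ * b ^ (1 + p) * f x * g y x = (volume S).toReal * (f x * g y x) := by
    rw [hvolS]; ring
  rw [goal_eq, ← Real.norm_eq_abs]
  calc ‖(∫ q in S, f q.1 * g q.2 q.1 ∂volume) - (volume S).toReal * (f x * g y x)‖
      ≤ 2 * (M + 1) * c * (b ^ η + b ^ β) * (volume S).toReal := hmain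
    _ = 2 * vol₁ * (2 * (M + 1) * c) * b ^ (1 + p) * (b ^ η + b ^ β) := by rw [hvolS]; ring
end

section
/- Let K : ℝ^p → ℝ be a nonnegative bounded kernel supported in the closed Euclidean unit ball, K_h(u) := h^{-p}K(u/h). Let f : ℝ^p → [0,∞) be a probability density and H : ℝ × ℝ^p → [0,1] a measurable function. Assume there exist β ∈ (0,1] and c > 0 such that |f(x) − f(y)| ≤ c‖x−y‖^β and |H(t|x) − H(t|y)| ≤ c‖x−y‖^β for all t and all x,y. Then for every x ∈ ℝ^p, t ∈ ℝ and h ∈ (0,1), | ∫_{ℝ^p} K_h(x−y)·H(t|y)·f(y) dy − H(t|x)·∫_{ℝ^p} K_h(x−y)·f(y) dy | ≤ h^β · C_{K,X,β}, where C_{K,X,β} := h^β·c²·∫_{ℝ^p} K(y)‖y‖^{2β} dy + c·f(x)·∫_{ℝ^p} K(y)‖y‖^β dy. In probabilistic terms, |E[K_h(x−X)·1_{Y ≤ t}] − H(t|x)·E[K_h(x−X)]| ≤ h^β·C_{K,X,β} when X has density f and H(t|·) is the conditional distribution function of Y given X. -/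
open MeasureTheory Metric

/-- Kernel bias bound (Lemma on `E[K_h(x−X)·1_{Y≤t}]`): under Hölder regularity
of the density `f` and of the conditional distribution function `H(t|·)`,
`|∫ K_h(x−y)H(t|y)f(y)dy − H(t|x)·∫ K_h(x−y)f(y)dy| ≤ h^β·C_{K,X,β}` where
`C_{K,X,β} = h^β·c²·∫K(y)‖y‖^{2β}dy + c·f(x)·∫K(y)‖y‖^β dy`. -/
theorem kernel_bias_bound (p : ℕ)
    (K : EuclideanSpace ℝ (Fin p) → ℝ) (hK0 : ∀ u, 0 ≤ K u) (hKm : Measurable K)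
    (CK : ℝ) (hKb : ∀ u, K u ≤ CK)
    (hKsupp : ∀ u, u ∉ closedBall (0 : EuclideanSpace ℝ (Fin p)) 1 → K u = 0)
    (f : EuclideanSpace ℝ (Fin p) → ℝ) (hf0 : ∀ u, 0 ≤ f u) (hfm : Measurable f)
    (hfint : ∫ u, f u = 1)
    (H : ℝ → EuclideanSpace ℝ (Fin p) → ℝ)
    (hHm : Measurable fun q : ℝ × EuclideanSpace ℝ (Fin p) => H q.1 q.2)
    (hH01 : ∀ t u, H t u ∈ Set.Icc (0 : ℝ) 1)
    (β c : ℝ) (hβ : β ∈ Set.Ioc (0 : ℝ) 1) (hc : 0 < c)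
    (hHolderf : ∀ u v, |f u - f v| ≤ c * ‖u - v‖ ^ β)
    (hHolderH : ∀ t u v, |H t u - H t v| ≤ c * ‖u - v‖ ^ β)
    (x : EuclideanSpace ℝ (Fin p)) (t : ℝ) (h : ℝ) (hh : h ∈ Set.Ioo (0 : ℝ) 1) :
    |(∫ u, (h ^ p)⁻¹ * K (h⁻¹ • (x - u)) * H t u * f u)
        - H t x * ∫ u, (h ^ p)⁻¹ * K (h⁻¹ • (x - u)) * f u|
      ≤ h ^ β * (h ^ β * c ^ 2 * (∫ u, K u * ‖u‖ ^ (2 * β))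
          + c * f x * ∫ u, K u * ‖u‖ ^ β) := by
  obtain ⟨hβ0, hβ1⟩ := hβ
  obtain ⟨hh0, hh1⟩ := hh
  have hhp : (0:ℝ) < h ^ p := pow_pos hh0 p
  have hCK0 : (0:ℝ) ≤ CK := le_trans (hK0 0) (hKb 0)
  -- measurability
  have hmap : Measurable fun u : EuclideanSpace ℝ (Fin p) => h⁻¹ • (x - u) :=
    ((continuous_const.sub continuous_id).const_smul h⁻¹).measurable
  have hHtm : Measurable fun u : EuclideanSpace ℝ (Fin p) => H t u :=
    hHm.comp measurable_prodMk_left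
  have hnorm : ∀ γ : ℝ, 0 ≤ γ → Measurable fun u : EuclideanSpace ℝ (Fin p) => ‖x - u‖ ^ γ := fun γ hγ =>
    ((Real.continuous_rpow_const hγ).comp
      (continuous_const.sub continuous_id).norm).measurable
  -- support of the kernel term
  have hg_supp : ∀ u : EuclideanSpace ℝ (Fin p), u ∉ closedBall x h → K (h⁻¹ • (x - u)) = 0 := by
    intro u hu
    apply hKsupp
    simp only [mem_closedBall, dist_zero_right, not_le] at *
    rw [norm_smul, norm_inv, Real.norm_eq_abs, abs_of_pos hh0]
    rw [dist_comm, dist_eq_norm] at hu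
    rw [← inv_mul_cancel₀ (ne_of_gt hh0)]
    exact (mul_lt_mul_iff_right₀ (inv_pos.2 hh0)).2 hu
  -- integrability of integrands of the form `K_h · r` with `r` bounded on the ball
  have intg : ∀ (r : EuclideanSpace ℝ (Fin p) → ℝ) (M : ℝ), Measurable r →
      (∀ u, u ∈ closedBall x h → |r u| ≤ M) →
      Integrable (fun u => (h ^ p)⁻¹ * K (h⁻¹ • (x - u)) * r u) := by
    intro r M hrm hrb
    have hM0 : 0 ≤ M := le_trans (abs_nonneg _) (hrb x (mem_closedBall_self hh0.le))
    refine Integrable.mono'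
      (g := (closedBall x h).indicator fun _ => (h ^ p)⁻¹ * CK * M) ?_ ?_ ?_
    · exact (integrableOn_const measure_closedBall_lt_top.ne).integrable_indicator
        measurableSet_closedBall
    · exact ((measurable_const.mul (hKm.comp hmap)).mul hrm).aestronglyMeasurable
    · refine Filter.Eventually.of_forall fun u => ?_
      by_cases hu : u ∈ closedBall x h
      · rw [Set.indicator_of_mem hu, Real.norm_eq_abs, abs_mul, abs_mul,
          abs_of_pos (inv_pos.2 hhp), abs_of_nonneg (hK0 _)]
        exact mul_le_mul (mul_le_mul le_rfl (hKb _) (hK0 _) (inv_pos.2 hhp).le)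
          (hrb u hu) (abs_nonneg _) (by positivity)
      · rw [Set.indicator_of_notMem hu, hg_supp u hu]
        simp
  -- basic pointwise bounds
  have hxu1 : ∀ u : EuclideanSpace ℝ (Fin p), u ∈ closedBall x h → ‖x - u‖ ^ β ≤ 1 := by
    intro u hu
    refine Real.rpow_le_one (norm_nonneg _) ?_ hβ0.le
    rw [mem_closedBall, dist_comm, dist_eq_norm] at hu
    calc ‖x - u‖ ≤ h := hu
    _ ≤ 1 := hh1.le
  have hfub : ∀ u : EuclideanSpace ℝ (Fin p), f u ≤ f x + c * ‖x - u‖ ^ β := by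
    intro u
    have := hHolderf u x
    rw [norm_sub_rev] at this
    have h2 : f u - f x ≤ c * ‖x - u‖ ^ β := le_trans (le_abs_self _) this
    linarith
  -- the key change-of-variables identity
  have key : ∀ γ : ℝ,
      (∫ u, (h ^ p)⁻¹ * K (h⁻¹ • (x - u)) * ‖x - u‖ ^ γ)
        = h ^ γ * ∫ v, K v * ‖v‖ ^ γ := by
    intro γ
    have e1 : (∫ u, (h ^ p)⁻¹ * K (h⁻¹ • (x - u)) * ‖x - u‖ ^ γ)
        = ∫ w, (h ^ p)⁻¹ * K (h⁻¹ • w) * ‖w‖ ^ γ :=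
      integral_sub_left_eq_self (fun w => (h ^ p)⁻¹ * K (h⁻¹ • w) * ‖w‖ ^ γ) volume x
    have e2 : ∀ w : EuclideanSpace ℝ (Fin p), (h ^ p)⁻¹ * K (h⁻¹ • w) * ‖w‖ ^ γ
        = (fun v : EuclideanSpace ℝ (Fin p) => (h ^ p)⁻¹ * K v * ‖h • v‖ ^ γ) (h⁻¹ • w) := by
      intro w
      simp only [smul_inv_smul₀ (ne_of_gt hh0)]
    have e3 : (∫ w, (fun v : EuclideanSpace ℝ (Fin p) => (h ^ p)⁻¹ * K v * ‖h • v‖ ^ γ) (h⁻¹ • w))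
        = (h ^ Module.finrank ℝ (EuclideanSpace ℝ (Fin p))) • ∫ v, (h ^ p)⁻¹ * K v * ‖h • v‖ ^ γ :=
      Measure.integral_comp_inv_smul_of_nonneg volume
        (fun v : EuclideanSpace ℝ (Fin p) => (h ^ p)⁻¹ * K v * ‖h • v‖ ^ γ) hh0.le
    have e4 : ∀ v : EuclideanSpace ℝ (Fin p), (h ^ p)⁻¹ * K v * ‖h • v‖ ^ γ
        = ((h ^ p)⁻¹ * h ^ γ) * (K v * ‖v‖ ^ γ) := by
      intro v
      rw [norm_smul, Real.norm_eq_abs, abs_of_pos hh0,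
        Real.mul_rpow hh0.le (norm_nonneg _)]
      ring
    have efr : Module.finrank ℝ (EuclideanSpace ℝ (Fin p)) = p := finrank_euclideanSpace_fin
    rw [e1]
    simp_rw [e2]
    rw [e3, efr]
    simp_rw [e4]
    rw [integral_const_mul, smul_eq_mul]
    field_simp
  -- rewrite the difference as a single integral
  have intA : Integrable (fun u => (h ^ p)⁻¹ * K (h⁻¹ • (x - u)) * (H t u * f u)) :=
    intg _ (f x + c) (hHtm.mul hfm) (by
      intro u hu
      have h1 : |H t u * f u| = H t u * f u := abs_of_nonneg (mul_nonneg (hH01 t u).1 (hf0 u))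
      rw [h1]
      calc H t u * f u ≤ 1 * (f x + c) := by
            apply mul_le_mul (hH01 t u).2 ?_ (hf0 u) zero_le_one
            calc f u ≤ f x + c * ‖x - u‖ ^ β := hfub u
            _ ≤ f x + c * 1 := by
                  have := hxu1 u hu; nlinarith
            _ = f x + c := by ring
        _ = f x + c := one_mul _)
  have intB : Integrable (fun u => (h ^ p)⁻¹ * K (h⁻¹ • (x - u)) * f u) :=
    intg _ (f x + c) hfm (by
      intro u hu
      rw [abs_of_nonneg (hf0 u)]
      calc f u ≤ f x + c * ‖x - u‖ ^ β := hfub u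
      _ ≤ f x + c * 1 := by have := hxu1 u hu; nlinarith
      _ = f x + c := by ring)
  have intD : Integrable (fun u => (h ^ p)⁻¹ * K (h⁻¹ • (x - u)) * ((H t u - H t x) * f u)) :=
    intg _ (2 * (f x + c)) ((hHtm.sub measurable_const).mul hfm) (by
      intro u hu
      rw [abs_mul, abs_of_nonneg (hf0 u)]
      have h1 : |H t u - H t x| ≤ 2 := by
        have h2 := (hH01 t u); have h3 := (hH01 t x)
        rw [Set.mem_Icc] at h2 h3
        rw [abs_le]; constructor <;> linarith
      have h4 : f u ≤ f x + c := by
        calc f u ≤ f x + c * ‖x - u‖ ^ β := hfub u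
        _ ≤ f x + c * 1 := by have := hxu1 u hu; nlinarith
        _ = f x + c := by ring
      have h5 : 0 ≤ f x + c := le_trans (hf0 u) h4
      calc |H t u - H t x| * f u ≤ 2 * (f x + c) :=
        mul_le_mul h1 h4 (hf0 u) (by norm_num))
  have int1 : Integrable (fun u => (h ^ p)⁻¹ * K (h⁻¹ • (x - u)) * ‖x - u‖ ^ β) :=
    intg _ 1 (hnorm β hβ0.le) (fun u hu => by
      rw [abs_of_nonneg (Real.rpow_nonneg (norm_nonneg _) _)]; exact hxu1 u hu)
  have int2 : Integrable (fun u => (h ^ p)⁻¹ * K (h⁻¹ • (x - u)) * ‖x - u‖ ^ (2 * β)) :=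
    intg _ 1 (hnorm (2 * β) (by linarith)) (fun u hu => by
      rw [abs_of_nonneg (Real.rpow_nonneg (norm_nonneg _) _)]
      refine Real.rpow_le_one (norm_nonneg _) ?_ (by linarith)
      rw [mem_closedBall, dist_comm, dist_eq_norm] at hu
      linarith)
  -- the difference equals a single integral
  have hdiff : (∫ u, (h ^ p)⁻¹ * K (h⁻¹ • (x - u)) * H t u * f u)
      - H t x * ∫ u, (h ^ p)⁻¹ * K (h⁻¹ • (x - u)) * f u
      = ∫ u, (h ^ p)⁻¹ * K (h⁻¹ • (x - u)) * ((H t u - H t x) * f u) := by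
    rw [← integral_const_mul (H t x), ← integral_sub (by simpa [mul_assoc] using intA)
      (intB.const_mul (H t x))]
    congr 1
    funext u
    ring
  rw [hdiff]
  -- bound the integral
  have hpt : ∀ u : EuclideanSpace ℝ (Fin p),
      |(h ^ p)⁻¹ * K (h⁻¹ • (x - u)) * ((H t u - H t x) * f u)|
      ≤ c * f x * ((h ^ p)⁻¹ * K (h⁻¹ • (x - u)) * ‖x - u‖ ^ β)
        + c ^ 2 * ((h ^ p)⁻¹ * K (h⁻¹ • (x - u)) * ‖x - u‖ ^ (2 * β)) := by
    intro u
    have hg0 : 0 ≤ (h ^ p)⁻¹ * K (h⁻¹ • (x - u)) :=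
      mul_nonneg (inv_pos.2 hhp).le (hK0 _)
    have hH' : |H t u - H t x| ≤ c * ‖x - u‖ ^ β := by
      have := hHolderH t u x
      rwa [norm_sub_rev] at this
    have hrw : ‖x - u‖ ^ (2 * β) = ‖x - u‖ ^ β * ‖x - u‖ ^ β := by
      rw [two_mul, Real.rpow_add' (norm_nonneg _) (by positivity)]
    rw [abs_mul, abs_of_nonneg hg0, abs_mul, abs_of_nonneg (hf0 u)]
    have h6 : |H t u - H t x| * f u ≤ (c * ‖x - u‖ ^ β) * (f x + c * ‖x - u‖ ^ β) :=
      mul_le_mul hH' (hfub u) (hf0 u) (by positivity)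
    calc (h ^ p)⁻¹ * K (h⁻¹ • (x - u)) * (|H t u - H t x| * f u)
        ≤ (h ^ p)⁻¹ * K (h⁻¹ • (x - u)) * ((c * ‖x - u‖ ^ β) * (f x + c * ‖x - u‖ ^ β)) :=
          mul_le_mul_of_nonneg_left h6 hg0
      _ = c * f x * ((h ^ p)⁻¹ * K (h⁻¹ • (x - u)) * ‖x - u‖ ^ β)
        + c ^ 2 * ((h ^ p)⁻¹ * K (h⁻¹ • (x - u)) * ‖x - u‖ ^ (2 * β)) := by
          rw [hrw]; ring
  have intRHS : Integrable (fun u => c * f x * ((h ^ p)⁻¹ * K (h⁻¹ • (x - u)) * ‖x - u‖ ^ β)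
      + c ^ 2 * ((h ^ p)⁻¹ * K (h⁻¹ • (x - u)) * ‖x - u‖ ^ (2 * β))) :=
    (int1.const_mul _).add (int2.const_mul _)
  have habs : |∫ u, (h ^ p)⁻¹ * K (h⁻¹ • (x - u)) * ((H t u - H t x) * f u)|
      ≤ ∫ u, |(h ^ p)⁻¹ * K (h⁻¹ • (x - u)) * ((H t u - H t x) * f u)| := by
    simpa only [Real.norm_eq_abs] using norm_integral_le_integral_norm
      (μ := volume) (fun u => (h ^ p)⁻¹ * K (h⁻¹ • (x - u)) * ((H t u - H t x) * f u))
  have hbound : (∫ u, |(h ^ p)⁻¹ * K (h⁻¹ • (x - u)) * ((H t u - H t x) * f u)|)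
      ≤ ∫ u, c * f x * ((h ^ p)⁻¹ * K (h⁻¹ • (x - u)) * ‖x - u‖ ^ β)
          + c ^ 2 * ((h ^ p)⁻¹ * K (h⁻¹ • (x - u)) * ‖x - u‖ ^ (2 * β)) :=
    integral_mono intD.abs intRHS hpt
  -- compute the bounding integral
  have hcomp : (∫ u, c * f x * ((h ^ p)⁻¹ * K (h⁻¹ • (x - u)) * ‖x - u‖ ^ β)
        + c ^ 2 * ((h ^ p)⁻¹ * K (h⁻¹ • (x - u)) * ‖x - u‖ ^ (2 * β)))
      = h ^ β * (h ^ β * c ^ 2 * (∫ u, K u * ‖u‖ ^ (2 * β))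
          + c * f x * ∫ u, K u * ‖u‖ ^ β) := by
    rw [integral_add (int1.const_mul _) (int2.const_mul _), integral_const_mul,
      integral_const_mul, key β, key (2 * β)]
    have h2b : h ^ (2 * β) = h ^ β * h ^ β := by
      rw [two_mul, Real.rpow_add hh0]
    rw [h2b]; ring
  calc |∫ u, (h ^ p)⁻¹ * K (h⁻¹ • (x - u)) * ((H t u - H t x) * f u)|
      ≤ ∫ u, |(h ^ p)⁻¹ * K (h⁻¹ • (x - u)) * ((H t u - H t x) * f u)| := habs
    _ ≤ ∫ u, c * f x * ((h ^ p)⁻¹ * K (h⁻¹ • (x - u)) * ‖x - u‖ ^ β)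
          + c ^ 2 * ((h ^ p)⁻¹ * K (h⁻¹ • (x - u)) * ‖x - u‖ ^ (2 * β)) := hbound
    _ = h ^ β * (h ^ β * c ^ 2 * (∫ u, K u * ‖u‖ ^ (2 * β))
          + c * f x * ∫ u, K u * ‖u‖ ^ β) := hcomp
end

section
/- Let α ≥ 0 and let q_0, q_1 > 0 be real numbers satisfying q_0/q_1 ≤ e^α and q_1/q_0 ≤ e^α. Let h_0, h_1 ∈ ℝ with h_0 + h_1 = 0. Then | q_0·h_0 + q_1·h_1 | ≤ (e^α − 1) · min(q_0, q_1) · |h_0|. -/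
/-- Key pointwise bound in the minimax lower-bound proof: if `q₀, q₁ > 0` are
channel density values with ratios bounded by `e^α`, and `h₀ + h₁ = 0`, then
`|q₀·h₀ + q₁·h₁| ≤ (e^α − 1)·min(q₀,q₁)·|h₀|`. -/
theorem channel_difference_pointwise_bound (α : ℝ) (hα : 0 ≤ α)
    (q0 q1 : ℝ) (hq0 : 0 < q0) (hq1 : 0 < q1)
    (h01 : q0 / q1 ≤ Real.exp α) (h10 : q1 / q0 ≤ Real.exp α)
    (h0 h1 : ℝ) (hsum : h0 + h1 = 0) :
    |q0 * h0 + q1 * h1| ≤ (Real.exp α - 1) * min q0 q1 * |h0| := by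
  have h1e : h1 = -h0 := by linarith
  subst h1e
  have key : |q0 - q1| ≤ (Real.exp α - 1) * min q0 q1 := by
    rw [div_le_iff₀ hq1] at h01
    rw [div_le_iff₀ hq0] at h10
    rcases le_total q0 q1 with h | h
    · rw [min_eq_left h, abs_sub_comm, abs_of_nonneg (by linarith)]; nlinarith
    · rw [min_eq_right h, abs_of_nonneg (by linarith)]; nlinarith
  calc |q0 * h0 + q1 * -h0| = |q0 - q1| * |h0| := by rw [← abs_mul]; ring_nf
    _ ≤ (Real.exp α - 1) * min q0 q1 * |h0| := by
        exact mul_le_mul_of_nonneg_right key (abs_nonneg _)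
end
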